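/- Let t be a real number with 2^{−it} = 1, i.e., t = 2kπ/log 2 for some nonzero integer k. Then for every natural number N ≥ 1, ζ*_{2N}(1 + it) = −N^{−it} · d_N(1 + it). -/
import Mathlib

open Finset Complex

-- auxiliary: 2^{-tI} = 1
lemma two_cpow_eq_one (t : ℝ) (k : ℤ) (ht : t = 2 * k * Real.pi / Real.log 2) :
    (2 : ℂ) ^ (-(t : ℂ) * Complex.I) = 1 := by
  have hlog : Real.log 2 ≠ 0 := by positivity
  have htl : (t : ℝ) * Real.log 2 = 2 * k * Real.pi := by
    rw [ht]; field_simp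
  rw [show (2:ℂ) = ((2:ℝ):ℂ) by norm_num,
    Complex.cpow_def_of_ne_zero (by norm_num), ← Complex.ofReal_log (by norm_num : (0:ℝ) ≤ 2)]
  rw [show ((Real.log 2 : ℂ)) * (-(t:ℂ) * Complex.I) = (-k : ℤ) * (2 * Real.pi * Complex.I) by
    have h1 : ((Real.log 2 : ℂ)) * (-(t:ℂ) * Complex.I) = -(((t * Real.log 2 : ℝ)):ℂ) * Complex.I := by
      push_cast; ring
    rw [h1, htl]; push_cast; ring]
  exact Complex.exp_int_mul_two_pi_mul_I _

lemma double_cpow (s : ℂ) (h2 : (2:ℂ)^s = 1/2) (m : ℕ) :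
    ((2*m : ℕ) : ℂ)^s = (1/2) * ((m:ℕ):ℂ)^s := by
  have h := Complex.mul_cpow_ofReal_nonneg (show (0:ℝ) ≤ 2 by norm_num) (Nat.cast_nonneg m) s
  push_cast at h ⊢
  rw [h, h2]

lemma alt_sum (s : ℂ) (h2 : (2:ℂ)^s = 1/2) (N : ℕ) :
    ∑ n ∈ Finset.Icc 1 (2*N), (-1:ℂ)^(n-1) * (n:ℂ)^s
      = ∑ n ∈ Finset.Ioc N (2*N), (n:ℂ)^s := by
  induction N with
  | zero => simp
  | succ N ih =>
    have e1 : 2*(N+1) = (2*N+1)+1 := by ring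
    rw [e1, Finset.sum_Icc_succ_top (by omega), Finset.sum_Icc_succ_top (by omega), ih]
    have k1 := Finset.sum_Ioc_consecutive (fun n : ℕ => ((n:ℕ):ℂ)^s)
      (show N ≤ N+1 by omega) (show N+1 ≤ (2*N+1)+1 by omega)
    have k2 := Finset.sum_Ioc_consecutive (fun n : ℕ => ((n:ℕ):ℂ)^s)
      (show N ≤ 2*N by omega) (show 2*N ≤ (2*N+1)+1 by omega)
    have k3 : ∑ n ∈ Finset.Ioc (2*N) ((2*N+1)+1), ((n:ℕ):ℂ)^s
        = ((2*N+1 : ℕ):ℂ)^s + ((2*N+2 : ℕ):ℂ)^s := by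
      rw [Finset.sum_Ioc_succ_top (by omega), Finset.sum_Ioc_succ_top (by omega)]
      simp; ring_nf
    have k4 : ∑ n ∈ Finset.Ioc N (N+1), ((n:ℕ):ℂ)^s = ((N+1 : ℕ):ℂ)^s := by
      rw [Nat.Ioc_succ_singleton, Finset.sum_singleton]
    have hd : ((2*(N+1) : ℕ):ℂ)^s = (1/2) * ((N+1 : ℕ):ℂ)^s := double_cpow s h2 (N+1)
    have hpow1 : (-1:ℂ)^(2*N+1-1) = 1 := by
      have : 2*N+1-1 = 2*N := by omega
      rw [this]; simp [pow_mul]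
    have hpow2 : (-1:ℂ)^((2*N+1)+1-1) = -1 := by
      have : (2*N+1)+1-1 = 2*N+1 := by omega
      rw [this]; simp [pow_succ, pow_mul]
    rw [hpow1, hpow2]
    have h2N2 : ((2*(N+1):ℕ):ℂ) = ((2*N+2 : ℕ):ℂ) := by norm_num; ring
    have hd' : ((2*N+2 : ℕ):ℂ)^s = (1/2) * ((N+1 : ℕ):ℂ)^s := by
      rw [← h2N2, hd]
    simp only [k4] at k1
    push_cast at *
    ring_nf
    ring_nf at k1 k2 k3 hd'
    linear_combination -k1 + k2 - k3 - 2*hd'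

lemma integral_zero (t : ℝ) (htne : t ≠ 0) (h2 : (2:ℂ)^(-(t:ℂ)*Complex.I) = 1) :
    (∫ x in (0:ℝ)..1, ((1 + x : ℝ):ℂ) ^ (-(1 + (t:ℂ) * Complex.I))) = 0 := by
  have hc := intervalIntegral.integral_comp_add_left
    (a := (0:ℝ)) (b := 1) (fun x : ℝ => ((x:ℝ):ℂ) ^ (-(1 + (t:ℂ) * Complex.I))) 1
  simp only [add_zero] at hc
  rw [show (∫ x in (0:ℝ)..1, ((1 + x : ℝ):ℂ) ^ (-(1 + (t:ℂ) * Complex.I)))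
      = ∫ x in (0:ℝ)..1, (fun y : ℝ => ((y:ℝ):ℂ) ^ (-(1 + (t:ℂ) * Complex.I))) (1 + x) by
    norm_num, hc]
  rw [integral_cpow (Or.inr ⟨by
      intro h
      have := congrArg Complex.im h
      simp at this
      exact htne this, by
      rw [Set.uIcc_of_le (by norm_num)]
      intro h
      rw [Set.mem_Icc] at h
      linarith [h.1]⟩)]
  have he : -(1 + (t:ℂ) * Complex.I) + 1 = -(t:ℂ) * Complex.I := by ring
  rw [he]
  norm_num
  left
  rw [← neg_mul, h2]
  ring

lemma term_eq (t : ℝ) (N j : ℕ) (hN : 1 ≤ N) :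
    ((N + j : ℕ):ℂ) ^ (-(1 + (t:ℂ)*Complex.I)) =
      (N:ℂ)^(-(t:ℂ)*Complex.I) * (1/(N:ℂ)) * (1 + (j:ℂ)/(N:ℂ)) ^ (-(1 + (t:ℂ)*Complex.I)) := by
  have hN0 : (0:ℝ) < N := by exact_mod_cast hN
  have hNC : ((N:ℝ):ℂ) ≠ 0 := by exact_mod_cast hN0.ne'
  have hNC' : ((N:ℕ):ℂ) ≠ 0 := Nat.cast_ne_zero.mpr (by omega)
  have key := Complex.mul_cpow_ofReal_nonneg
    (show (0:ℝ) ≤ 1 + (j:ℝ)/(N:ℝ) by positivity) hN0.le (-(1 + (t:ℂ)*Complex.I))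
  have e1 : ((1 + (j:ℝ)/(N:ℝ) : ℝ):ℂ) * ((N:ℝ):ℂ) = ((N + j : ℕ) : ℂ) := by
    push_cast
    field_simp [hNC']
  rw [e1] at key
  have e2 : ((1 + (j:ℝ)/(N:ℝ) : ℝ) : ℂ) = 1 + (j:ℂ)/(N:ℂ) := by push_cast; ring
  rw [e2] at key
  rw [key]
  have e3 : ((N:ℝ):ℂ) ^ (-(1 + (t:ℂ)*Complex.I))
      = (1/(N:ℂ)) * (N:ℂ)^(-(t:ℂ)*Complex.I) := by
    rw [show -(1 + (t:ℂ)*Complex.I) = (-1) + (-(t:ℂ)*Complex.I) by ring,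
      Complex.cpow_add _ _ hNC, Complex.cpow_neg_one]
    push_cast
    ring
  rw [e3]
  ring

theorem alt_partial_at_special_point (t : ℝ) (k : ℤ) (hk : k ≠ 0)
    (ht : t = 2 * k * Real.pi / Real.log 2) (N : ℕ) (hN : 1 ≤ N) :
    (∑ n ∈ Finset.Icc 1 (2 * N), (-1 : ℂ) ^ (n - 1) * (n : ℂ) ^ (-(1 + t * Complex.I))) =
      -(N : ℂ) ^ (-(t : ℂ) * Complex.I) *
        ((∫ x in (0 : ℝ)..1, ((1 + x : ℝ) : ℂ) ^ (-(1 + t * Complex.I))) -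
          (1 / (N : ℂ)) *
            ∑ j ∈ Finset.Icc 1 N, (1 + (j : ℂ) / (N : ℂ)) ^ (-(1 + t * Complex.I))) := by
  have hlog : Real.log 2 ≠ 0 := by positivity
  have htne : t ≠ 0 := by
    rw [ht]
    exact div_ne_zero
      (mul_ne_zero (mul_ne_zero two_ne_zero (Int.cast_ne_zero.mpr hk)) Real.pi_ne_zero) hlog
  have h2one := two_cpow_eq_one t k ht
  have h2half : (2:ℂ) ^ (-(1 + (t:ℂ) * Complex.I)) = 1/2 := by
    rw [show -(1 + (t:ℂ)*Complex.I) = (-1) + (-(t:ℂ)*Complex.I) by ring,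
      Complex.cpow_add _ _ (by norm_num), Complex.cpow_neg_one, h2one]
    norm_num
  rw [alt_sum _ h2half N, integral_zero t htne h2one]
  rw [zero_sub, neg_mul_neg, ← mul_assoc, Finset.mul_sum]
  have hset : Finset.Ioc N (2*N) = (Finset.Icc 1 N).map (addLeftEmbedding N) := by
    ext x
    simp only [Finset.mem_Ioc, Finset.mem_map, Finset.mem_Icc, addLeftEmbedding_apply]
    constructor
    · intro h; exact ⟨x - N, by omega, by omega⟩
    · rintro ⟨a, ha, rfl⟩; omega
  rw [hset, Finset.sum_map]
  refine Finset.sum_congr rfl fun j hj => ?_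
  simp only [addLeftEmbedding_apply]
  rw [term_eq t N j hN]
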